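/- Let (X, O) be a finite ringed space (a finite topological space with a sheaf of commutative rings). An O-module M is quasi-coherent if and only if for all points x ≤ y of X, the natural map M_x ⊗_{O_x} O_y → M_y (induced by the restriction map) is an isomorphism. -/

import Mathlib

open scoped TensorProduct

/-- A finite ringed space, encoded combinatorially: a finite preordered set `X` (the topology is
the Alexandrov topology whose open sets are the upper sets, and `U_x = Set.Ici x` is the minimal
open neighbourhood of `x`), a commutative ring `O x` at each point (the stalk,
`O x = O(U_x)`), and compatible restriction ring homomorphisms. -/
structure FRS : Type 1 where
  X : Type
  [fin : Finite X]
  [ord : Preorder X]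
  O : X → Type
  [ring : ∀ x, CommRing (O x)]
  res : ∀ {x y : X}, x ≤ y → O x →+* O y
  res_refl : ∀ x : X, res (le_refl x) = RingHom.id (O x)
  res_trans : ∀ {x y z : X} (h₁ : x ≤ y) (h₂ : y ≤ z),
      (res h₂).comp (res h₁) = res (h₁.trans h₂)

attribute [instance] FRS.fin FRS.ord FRS.ring

namespace FRS

variable (S : FRS)

/-- The sections of the structure sheaf over a subset `U` (intended: an open, i.e. upper, set):
compatible families of stalk elements. -/
def sect (U : Set S.X) : Subring (∀ z : U, S.O z.1) where
  carrier := { s | ∀ ⦃z w : U⦄ (h : z.1 ≤ w.1), S.res h (s z) = s w }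
  zero_mem' := by intro z w h; simp
  one_mem' := by intro z w h; simp
  add_mem' := by
    intro a b ha hb z w h
    simp only [Pi.add_apply, map_add, ha h, hb h]
  mul_mem' := by
    intro a b ha hb z w h
    simp only [Pi.mul_apply, map_mul, ha h, hb h]
  neg_mem' := by
    intro a ha z w h
    simp only [Pi.neg_apply, map_neg, ha h]

/-- The ring of sections over `U`. -/
abbrev Gamma (U : Set S.X) : Type := ↥(S.sect U)

/-- Evaluation of a section at a point of `U` (restriction to the stalk). -/
def ev {U : Set S.X} (x : S.X) (hx : x ∈ U) : S.Gamma U →+* S.O x :=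
  (Pi.evalRingHom _ (⟨x, hx⟩ : U)).comp (S.sect U).subtype

/-- Restriction of global sections to the stalk at `x`. -/
def toStalk (x : S.X) : S.Gamma Set.univ →+* S.O x :=
  S.ev x (Set.mem_univ x)

/-- The canonical morphism `O(X) → ∏ₓ O_x`. -/
def toProd : S.Gamma Set.univ →+* ∀ x : S.X, S.O x :=
  Pi.ringHom fun x => S.toStalk x

/-- Restriction of sections along an inclusion of subsets. -/
def resSect {U V : Set S.X} (h : V ⊆ U) : S.Gamma U →+* S.Gamma V where
  toFun s := ⟨fun z => (s : ∀ z : U, S.O z.1) ⟨z.1, h z.2⟩,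
    fun z w hzw => s.2 (z := ⟨z.1, h z.2⟩) (w := ⟨w.1, h w.2⟩) hzw⟩
  map_one' := rfl
  map_mul' _ _ := rfl
  map_zero' := rfl
  map_add' _ _ := rfl

/-- The canonical map from the stalk at `x` to the sections over a subset of `U_x = Ici x`. -/
def stalkSect {x : S.X} {U : Set S.X} (hU : U ⊆ Set.Ici x) : S.O x →+* S.Gamma U where
  toFun a := ⟨fun z => S.res (hU z.2) a, by
    intro z w h
    have := RingHom.congr_fun (S.res_trans (hU z.2) h) a
    simpa using this⟩
  map_one' := by ext z; simp
  map_mul' a b := by ext z; simp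
  map_zero' := by ext z; simp
  map_add' a b := by ext z; simp

/-- The canonical morphism `O(U) → ∏_{z ∈ U} O_z`. -/
def sectToProd (U : Set S.X) : S.Gamma U →+* ∀ z : U, S.O z.1 :=
  (S.sect U).subtype

/-- Each stalk is an algebra over the ring of global sections. -/
noncomputable instance globAlgebra (x : S.X) : Algebra (S.Gamma Set.univ) (S.O x) :=
  (S.toStalk x).toAlgebra

/-- The sections over any subset form an algebra over the ring of global sections. -/
noncomputable instance gammaAlgebra (U : Set S.X) :
    Algebra (S.Gamma Set.univ) (S.Gamma U) :=
  (S.resSect (Set.subset_univ U)).toAlgebra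

end FRS

/-- A ring homomorphism is faithfully flat if it makes the target into a faithfully flat module
over the source. -/
def RingHom.IsFaithfullyFlatHom {A B : Type*} [CommRing A] [CommRing B] (f : A →+* B) : Prop :=
  @Module.FaithfullyFlat A B _ _ (Module.compHom B f)

/-- A ring homomorphism is flat if it makes the target into a flat module over the source. -/
def RingHom.IsFlatHom {A B : Type*} [CommRing A] [CommRing B] (f : A →+* B) : Prop :=
  @Module.Flat A B _ _ (Module.compHom B f)

namespace FRS

variable (S : FRS)

/-- `X` is an affine finite space: (1) `O(X) → ∏ₓ O_x` is faithfully flat; (2) the natural map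
`O_x ⊗_{O(X)} O_y → O(U_x ∩ U_y)` (characterized on simple tensors) is an isomorphism;
(3) `O(U_x ∩ U_y) → ∏_{z ∈ U_x ∩ U_y} O_z` is faithfully flat. -/
def IsAffine : Prop :=
  S.toProd.IsFaithfullyFlatHom ∧
  (∀ x y : S.X,
    ∀ ψ : ((S.O x) ⊗[S.Gamma Set.univ] (S.O y)) →+* S.Gamma (Set.Ici x ∩ Set.Ici y),
      (∀ (a : S.O x) (b : S.O y) (z : ↥(Set.Ici x ∩ Set.Ici y)),
        ((ψ (a ⊗ₜ b)) : ∀ w : ↥(Set.Ici x ∩ Set.Ici y), S.O w.1) z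
          = S.res z.2.1 a * S.res z.2.2 b) →
      Function.Bijective ψ) ∧
  (∀ x y : S.X, (S.sectToProd (Set.Ici x ∩ Set.Ici y)).IsFaithfullyFlatHom)

/-- The open (= upper) subset `U`, as a finite ringed space in its own right. -/
noncomputable def restrict (U : Set S.X) : FRS where
  X := ↥U
  fin := inferInstance
  ord := inferInstance
  O := fun u => S.O u.1
  ring := fun _ => inferInstance
  res := fun h => S.res h
  res_refl := fun u => S.res_refl u.1
  res_trans := fun h₁ h₂ => S.res_trans h₁ h₂

/-- An affine open subset. -/
def IsAffineOpen (U : Set S.X) : Prop :=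
  IsUpperSet U ∧ (S.restrict U).IsAffine

/-- A schematic finite space: every minimal open set `U_x` is affine. -/
def IsSchematic : Prop :=
  ∀ x : S.X, (S.restrict (Set.Ici x)).IsAffine

end FRS
namespace FRS

/-- A sheaf of `O`-modules on a finite ringed space, given stalkwise: an `O_x`-module `M x` for
each point, with additive restriction maps that are semilinear with respect to the ring
restrictions. -/
structure Mod (S : FRS) : Type 1 where
  M : S.X → Type
  [ab : ∀ x, AddCommGroup (M x)]
  [mod : ∀ x, Module (S.O x) (M x)]
  res : ∀ {x y : S.X}, x ≤ y → M x →+ M y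
  res_smul : ∀ {x y : S.X} (h : x ≤ y) (a : S.O x) (m : M x),
      res h (a • m) = S.res h a • res h m
  res_refl : ∀ (x : S.X) (m : M x), res (le_refl x) m = m
  res_trans : ∀ {x y z : S.X} (h₁ : x ≤ y) (h₂ : y ≤ z) (m : M x),
      res h₂ (res h₁ m) = res (h₁.trans h₂) m

attribute [instance] Mod.ab Mod.mod

variable {S : FRS}

/-- A module sheaf `M` is quasi-coherent iff for all `x ≤ y` the natural map
`M_x ⊗_{O_x} O_y → M_y`, `m ⊗ b ↦ b • (res m)` (characterized here on simple tensors),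
is an isomorphism. -/
def Mod.IsQcoh (M : S.Mod) : Prop :=
  ∀ ⦃x y : S.X⦄ (h : x ≤ y),
    letI : Module (S.O x) (S.O y) := Module.compHom _ (S.res h)
    ∀ ψ : (TensorProduct (S.O x) (M.M x) (S.O y)) →+ M.M y,
      (∀ (m : M.M x) (b : S.O y), ψ (m ⊗ₜ[S.O x] b) = b • M.res h m) →
      Function.Bijective ψ

end FRS
namespace FRS

variable {S : FRS}

/-- A morphism of module sheaves on a finite ringed space: an `O_x`-linear map on each stalk,
commuting with the restrictions. -/
structure ModHom (M N : S.Mod) where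
  map : ∀ x : S.X, M.M x →ₗ[S.O x] N.M x
  comm : ∀ {x y : S.X} (h : x ≤ y) (m : M.M x),
      N.res h (map x m) = map y (M.res h m)

/-- The kernel of a morphism of module sheaves. -/
noncomputable def ModHom.ker {M N : S.Mod} (f : ModHom M N) : S.Mod where
  M x := ↥(LinearMap.ker (f.map x))
  res {x y} h :=
    { toFun := fun m => ⟨M.res h m.1, by
        have h1 : f.map y (M.res h m.1) = N.res h (f.map x m.1) := (f.comm h m.1).symm
        have h2 : f.map x m.1 = 0 := m.2
        simp only [LinearMap.mem_ker, h1, h2, map_zero]⟩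
      map_zero' := by
        ext
        simp
      map_add' := fun a b => by
        ext
        simp }
  res_smul h a m := by
    ext
    exact M.res_smul h a m.1
  res_refl x m := by
    ext
    exact M.res_refl x m.1
  res_trans h₁ h₂ m := by
    ext
    exact M.res_trans h₁ h₂ m.1

/-- The restriction of a module sheaf to an open subspace. -/
noncomputable def Mod.restrictTo (M : S.Mod) (U : Set S.X) : (S.restrict U).Mod where
  M u := M.M u.1
  ab u := inferInstanceAs (AddCommGroup (M.M u.1))
  mod u := M.mod u.1
  res h := M.res h
  res_smul h a m := M.res_smul h a m
  res_refl u m := M.res_refl u.1 m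
  res_trans h₁ h₂ m := M.res_trans h₁ h₂ m

/-- The free module sheaf on an index type `I`: its stalk at `x` is `O_x^{(I)}`. -/
noncomputable def freeMod (S : FRS) (I : Type) : S.Mod where
  M x := I →₀ S.O x
  res h := Finsupp.mapRange.addMonoidHom (S.res h).toAddMonoidHom
  res_smul h a m := by
    ext i
    simp
  res_refl x m := by
    ext i
    simp [RingHom.congr_fun (S.res_refl x)]
  res_trans h₁ h₂ m := by
    ext i
    have := RingHom.congr_fun (S.res_trans h₁ h₂) (m i)
    simpa using this

/-- A module sheaf admits local presentations: near every point there are index types `I`, `J`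
and an exact sequence `O|_U^{(I)} → O|_U^{(J)} → M|_U → 0` (exactness being measured stalkwise,
as is appropriate on a finite space). -/
def Mod.HasLocalPresentation (M : S.Mod) : Prop :=
  ∀ x : S.X, ∃ (U : Set S.X) (_ : IsUpperSet U) (_ : x ∈ U) (I J : Type)
    (φ : ModHom (freeMod (S.restrict U) I) (freeMod (S.restrict U) J))
    (ψ : ModHom (freeMod (S.restrict U) J) (M.restrictTo U)),
      (∀ u : ↥U, Function.Surjective (ψ.map u)) ∧
      (∀ u : (S.restrict U).X, LinearMap.range (φ.map u) = LinearMap.ker (ψ.map u))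

end FRS

section DiagLemmas

open Function

private theorem diagA {A B C A' B' C' : Type*}
    [AddCommGroup C] [AddCommGroup C']
    (f : A → B) (g : B → C) (f' : A' → B') (g' : B' → C')
    (eA : A → A') (eB : B → B') (ψ : C →+ C')
    (sq1 : ∀ a, eB (f a) = f' (eA a)) (sq2 : ∀ b, ψ (g b) = g' (eB b))
    (heA : Surjective eA) (heB : Bijective eB)
    (hg : Surjective g) (hgf : ∀ a, g (f a) = 0)
    (hg' : Surjective g') (hker' : ∀ b', g' b' = 0 → ∃ a', f' a' = b') :
    Bijective ψ := by
  constructor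
  · rw [injective_iff_map_eq_zero]
    intro c hc
    obtain ⟨b, rfl⟩ := hg c
    have h1 : g' (eB b) = 0 := by rw [← sq2, hc]
    obtain ⟨a', ha'⟩ := hker' _ h1
    obtain ⟨a, rfl⟩ := heA a'
    have hb : f a = b := heB.1 (by rw [sq1, ha'])
    rw [← hb, hgf]
  · intro c'
    obtain ⟨b', hb'⟩ := hg' c'
    obtain ⟨b, rfl⟩ := heB.2 b'
    exact ⟨g b, by rw [sq2, hb']⟩

private theorem diagB {A B C A' B' C' : Type*}
    [AddCommGroup C] [AddCommGroup C']
    (f : A → B) (g : B → C) (f' : A' → B') (g' : B' → C')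
    (eA : A → A') (eB : B → B') (ψ : C →+ C')
    (sq1 : ∀ a, eB (f a) = f' (eA a)) (sq2 : ∀ b, ψ (g b) = g' (eB b))
    (heA : Surjective eA) (heB : Bijective eB) (hψ : Bijective ψ)
    (hg : Surjective g) (hgf : ∀ a, g (f a) = 0)
    (hker : ∀ b, g b = 0 → ∃ a, f a = b) :
    Surjective g' ∧ (∀ a', g' (f' a') = 0) ∧ (∀ b', g' b' = 0 → ∃ a', f' a' = b') := by
  refine ⟨?_, ?_, ?_⟩
  · intro c'
    obtain ⟨c, rfl⟩ := hψ.2 c'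
    obtain ⟨b, rfl⟩ := hg c
    exact ⟨eB b, (sq2 b).symm⟩
  · intro a'
    obtain ⟨a, rfl⟩ := heA a'
    rw [← sq1, ← sq2, hgf, map_zero]
  · intro b' hb'
    obtain ⟨b, rfl⟩ := heB.2 b'
    have h0 : ψ (g b) = ψ 0 := by rw [sq2, hb', map_zero]
    obtain ⟨a, ha⟩ := hker _ (hψ.1 h0)
    exact ⟨eA a, by rw [← sq1, ha]⟩

end DiagLemmas

section BaseChange

variable {R R' : Type*} [CommRing R] [CommRing R'] (ρ : R →+* R')

/-- `Finsupp.mapRange` along a ring hom, as an `AddMonoidHom`. -/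
private noncomputable def mapR {K : Type*} : (K →₀ R) →+ (K →₀ R') :=
  Finsupp.mapRange.addMonoidHom ρ.toAddMonoidHom

private lemma mapR_single {K : Type*} (k : K) (r : R) :
    mapR ρ (Finsupp.single k r) = Finsupp.single k (ρ r) := by
  simp [mapR]

private lemma mapR_smul {K : Type*} (r : R) (f : K →₀ R) :
    mapR ρ (r • f) = ρ r • mapR ρ f := by
  ext k
  simp [mapR]

private lemma mapR_mapR {R'' : Type*} [CommRing R''] (ρ' : R' →+* R'') {K : Type*}
    (f : K →₀ R) : mapR ρ' (mapR ρ f) = mapR (ρ'.comp ρ) f := by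
  ext k
  simp [mapR]

/-- Commuting a `ρ`-semilinear additive map past a linear combination. -/
private lemma lc_comm {N N' : Type*} [AddCommGroup N] [AddCommGroup N']
    [Module R N] [Module R' N'] (T : N →+ N') (hT : ∀ (r : R) (n : N), T (r • n) = ρ r • T n)
    {ι : Type*} (v : ι → N) (f : ι →₀ R) :
    T (Finsupp.linearCombination R v f) =
      Finsupp.linearCombination R' (fun i => T (v i)) (mapR ρ f) := by
  induction f using Finsupp.induction with
  | zero => simp
  | single_add a r f _ _ ih =>
    rw [map_add (Finsupp.linearCombination R v), map_add T, ih, map_add (mapR ρ),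
      map_add (Finsupp.linearCombination R' fun i => T (v i)), Finsupp.linearCombination_single,
      hT, mapR_single, Finsupp.linearCombination_single]

variable [Module R R'] (hsm : ∀ (r : R) (b : R'), r • b = ρ r * b)

include hsm

/-- The base-change isomorphism `(K →₀ R) ⊗[R] R' ≃ (K →₀ R')`, additively. -/
private theorem baseE_exists (K : Type*) :
    ∃ e : TensorProduct R (K →₀ R) R' →+ (K →₀ R'),
      (∀ (f : K →₀ R) (b : R'), e (f ⊗ₜ[R] b) = b • mapR ρ f) ∧ Function.Bijective e := by
  letI acg : AddCommGroup (TensorProduct R (K →₀ R) R') := inferInstance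
  letI acm : AddCommMonoid (TensorProduct R (K →₀ R) R') := acg.toAddCommMonoid
  letI am : AddMonoid (TensorProduct R (K →₀ R) R') := acm.toAddMonoid
  letI azc : AddZeroClass (TensorProduct R (K →₀ R) R') := am.toAddZeroClass
  letI z : Zero (TensorProduct R (K →₀ R) R') := azc.toZero
  let F : (K →₀ R) →+ R' →+ (K →₀ R') := AddMonoidHom.mk'
    (fun f => AddMonoidHom.mk' (fun b => b • mapR ρ f) (fun b c => add_smul b c _))
    (fun f g => by ext b k; simp [map_add, smul_add])
  have hF : ∀ (r : R) (f : K →₀ R) (b : R'), F (r • f) b = F f (r • b) := by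
    intro r f b
    show b • mapR ρ (r • f) = (r • b) • mapR ρ f
    rw [mapR_smul, hsm, smul_smul, mul_comm]
  refine ⟨TensorProduct.liftAddHom F hF, fun f b => rfl, ?_⟩
  let G : (K →₀ R') →+ TensorProduct R (K →₀ R) R' :=
    Finsupp.liftAddHom (fun k => AddMonoidHom.mk' (fun c => Finsupp.single k 1 ⊗ₜ[R] c)
      (fun c d => TensorProduct.tmul_add _ c d))
  have hGsingle : ∀ (k : K) (c : R'), G (Finsupp.single k c) = Finsupp.single k 1 ⊗ₜ[R] c :=
    fun k c => Finsupp.liftAddHom_apply_single _ k c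
  have hR : ∀ v, TensorProduct.liftAddHom F hF (G v) = v := by
    intro v
    induction v using Finsupp.induction with
    | zero => rw [G.map_zero, (TensorProduct.liftAddHom F hF).map_zero]
    | single_add k c f _ _ ih =>
      rw [G.map_add, (TensorProduct.liftAddHom F hF).map_add, ih, hGsingle]
      congr 1
      show c • mapR ρ (Finsupp.single k 1) = Finsupp.single k c
      rw [mapR_single, map_one, Finsupp.smul_single, smul_eq_mul, mul_one]
  have hL : ∀ t, G (TensorProduct.liftAddHom F hF t) = t := by
    intro t
    induction t with
    | zero => rw [(TensorProduct.liftAddHom F hF).map_zero, G.map_zero]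
    | add s t ihs iht =>
      rw [(TensorProduct.liftAddHom F hF).map_add, G.map_add, ihs, iht]
    | tmul f b =>
      induction f using Finsupp.induction with
      | zero =>
        rw [TensorProduct.zero_tmul, (TensorProduct.liftAddHom F hF).map_zero, G.map_zero]
      | single_add k r f _ _ ih =>
        rw [TensorProduct.add_tmul, (TensorProduct.liftAddHom F hF).map_add, G.map_add, ih]
        congr 1
        show G (b • mapR ρ (Finsupp.single k r)) = Finsupp.single k r ⊗ₜ[R] b
        rw [mapR_single, Finsupp.smul_single, smul_eq_mul, hGsingle]
        rw [show Finsupp.single k r = r • Finsupp.single k (1 : R) by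
          rw [Finsupp.smul_single, smul_eq_mul, mul_one]]
        rw [TensorProduct.smul_tmul, hsm, mul_comm]
  exact ⟨fun a b hab => by rw [← hL a, hab, hL b], fun v => ⟨G v, hR v⟩⟩

end BaseChange

/-- On a finite ringed space, an `O`-module `M` is quasi-coherent (it admits
local presentations `O|_U^{(I)} → O|_U^{(J)} → M|_U → 0`) if and only if for all `x ≤ y` the
natural map `M_x ⊗_{O_x} O_y → M_y` is an isomorphism. -/
theorem FRS.Mod.hasLocalPresentation_iff_isQcoh {S : FRS} (M : S.Mod) :
    M.HasLocalPresentation ↔ M.IsQcoh := by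
  constructor
  · -- local presentation → qcoh
    intro hP x y h
    letI : Module (S.O x) (S.O y) := Module.compHom _ (S.res h)
    intro ψ hψ
    obtain ⟨U, hU, hxU, I, J, φ, ψ', hsurj, hexact⟩ := hP x
    have hyU : y ∈ U := hU h hxU
    set ux : ↥U := ⟨x, hxU⟩ with hux
    set uy : ↥U := ⟨y, hyU⟩ with huy
    have hxy : ux ≤ uy := Subtype.mk_le_mk.mpr h
    let φxl : (I →₀ S.O x) →ₗ[S.O x] (J →₀ S.O x) := φ.map ux
    let ψxl : (J →₀ S.O x) →ₗ[S.O x] M.M x := ψ'.map ux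
    let φyl : (I →₀ S.O y) →ₗ[S.O y] (J →₀ S.O y) := φ.map uy
    let ψyl : (J →₀ S.O y) →ₗ[S.O y] M.M y := ψ'.map uy
    have hSx : Function.Surjective ψxl := hsurj ux
    have hSy : Function.Surjective ψyl := hsurj uy
    have hEx : Function.Exact φxl ψxl := LinearMap.exact_iff.mpr (hexact ux).symm
    have hTex : Function.Exact (LinearMap.rTensor (S.O y) φxl)
        (LinearMap.rTensor (S.O y) ψxl) := rTensor_exact (S.O y) hEx hSx
    have hTsurj : Function.Surjective (LinearMap.rTensor (S.O y) ψxl) :=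
      LinearMap.rTensor_surjective (S.O y) hSx
    obtain ⟨eI, heI, heIbij⟩ := baseE_exists (S.res h) (fun r b => rfl) I
    obtain ⟨eJ, heJ, heJbij⟩ := baseE_exists (S.res h) (fun r b => rfl) J
    have hcommφ : ∀ f : I →₀ S.O x, φyl (mapR (S.res h) f) = mapR (S.res h) (φxl f) :=
      fun f => (φ.comm hxy f).symm
    have hcommψ : ∀ f : J →₀ S.O x, M.res h (ψxl f) = ψyl (mapR (S.res h) f) :=
      fun f => ψ'.comm hxy f
    have sq1 : ∀ t, eJ (LinearMap.rTensor (S.O y) φxl t) = φyl (eI t) := by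
      intro t
      induction t with
      | zero =>
        rw [(LinearMap.rTensor (S.O y) φxl).map_zero, eJ.map_zero, eI.map_zero, φyl.map_zero]
      | tmul f b =>
        rw [LinearMap.rTensor_tmul, heJ, heI, φyl.map_smul, hcommφ]
      | add s t ihs iht =>
        rw [(LinearMap.rTensor (S.O y) φxl).map_add, eJ.map_add, eI.map_add,
          φyl.map_add, ihs, iht]
    have sq2 : ∀ t, ψ (LinearMap.rTensor (S.O y) ψxl t) = ψyl (eJ t) := by
      intro t
      induction t with
      | zero =>
        rw [(LinearMap.rTensor (S.O y) ψxl).map_zero, ψ.map_zero, eJ.map_zero, ψyl.map_zero]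
      | tmul f b =>
        rw [LinearMap.rTensor_tmul, hψ, heJ, ψyl.map_smul, ← hcommψ]
      | add s t ihs iht =>
        rw [(LinearMap.rTensor (S.O y) ψxl).map_add, ψ.map_add, eJ.map_add,
          ψyl.map_add, ihs, iht]
    refine diagA (LinearMap.rTensor (S.O y) φxl) (LinearMap.rTensor (S.O y) ψxl)
      φyl ψyl eI eJ ψ sq1 sq2 heIbij.2 heJbij hTsurj
      hTex.apply_apply_eq_zero hSy ?_
    intro b' hb'
    obtain ⟨a, ha⟩ := (SetLike.ext_iff.mp (hexact uy) b').mpr hb'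
    exact ⟨a, ha⟩
  · -- qcoh → local presentation
    intro hQ x
    set R := S.O x with hR
    set U := Set.Ici x with hUdef
    let ψx : ((M.M x) →₀ R) →ₗ[R] M.M x := Finsupp.linearCombination R id
    let Ix : Type := ↥(LinearMap.ker ψx)
    let φx : (Ix →₀ R) →ₗ[R] ((M.M x) →₀ R) := Finsupp.linearCombination R Subtype.val
    have hSx : Function.Surjective ψx := Finsupp.linearCombination_id_surjective R (M.M x)
    have hexact0 : LinearMap.range φx = LinearMap.ker ψx := by
      show LinearMap.range (Finsupp.linearCombination R (Subtype.val : Ix → _)) = _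
      rw [Finsupp.range_linearCombination, Subtype.range_val]
      exact Submodule.span_eq _
    have hEx : Function.Exact φx ψx := LinearMap.exact_iff.mpr hexact0.symm
    let φm : ModHom (freeMod (S.restrict U) Ix) (freeMod (S.restrict U) (M.M x)) :=
      { map := fun u => (Finsupp.linearCombination (S.O u.1)
          (fun i => mapR (S.res u.2) (i.1 : (M.M x) →₀ R)) :
            (Ix →₀ S.O u.1) →ₗ[S.O u.1] ((M.M x) →₀ S.O u.1))
        comm := by
          intro u w hw f
          show mapR (S.res hw) (Finsupp.linearCombination (S.O u.1)
              (fun i => mapR (S.res u.2) (i.1 : (M.M x) →₀ R)) f)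
            = Finsupp.linearCombination (S.O w.1)
              (fun i => mapR (S.res w.2) (i.1 : (M.M x) →₀ R)) (mapR (S.res hw) f)
          erw [lc_comm (S.res hw) (mapR (S.res hw)) (mapR_smul (S.res hw))]
          have hv : (fun i : Ix => mapR (S.res hw) (mapR (S.res u.2) (i.1 : (M.M x) →₀ R)))
              = fun i : Ix => mapR (S.res w.2) (i.1 : (M.M x) →₀ R) := by
            funext i
            erw [mapR_mapR, S.res_trans]
          rw [hv] }
    let ψm : ModHom (freeMod (S.restrict U) (M.M x)) (M.restrictTo U) :=
      { map := fun u => (Finsupp.linearCombination (S.O u.1) (fun j => M.res u.2 j) :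
            ((M.M x) →₀ S.O u.1) →ₗ[S.O u.1] M.M u.1)
        comm := by
          intro u w hw f
          show M.res hw (Finsupp.linearCombination (S.O u.1)
              (fun j => M.res u.2 j) f) = Finsupp.linearCombination (S.O w.1)
              (fun j => M.res w.2 j) (mapR (S.res hw) f)
          erw [lc_comm (S.res hw) (M.res hw) (M.res_smul hw)]
          have hv : (fun j : M.M x => M.res hw (M.res u.2 j))
              = fun j : M.M x => M.res w.2 j := by
            funext j
            exact M.res_trans u.2 hw j
          rw [hv] }
    have key : ∀ u : (S.restrict U).X, Function.Surjective (ψm.map u) ∧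
        (∀ a, ψm.map u (φm.map u a) = 0) ∧
        (∀ b, ψm.map u b = 0 → ∃ a, φm.map u a = b) := by
      intro u
      letI : Module (S.O x) (S.O u.1) := Module.compHom _ (S.res u.2)
      obtain ⟨eI, heI, heIbij⟩ := baseE_exists (S.res u.2) (fun r b => rfl) Ix
      obtain ⟨eJ, heJ, heJbij⟩ := baseE_exists (S.res u.2) (fun r b => rfl) (M.M x)
      let Ft : M.M x →+ S.O u.1 →+ M.M u.1 := AddMonoidHom.mk'
        (fun m => AddMonoidHom.mk' (fun b => b • M.res u.2 m) (fun b c => add_smul b c _))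
        (fun m m' => by ext b; simp [smul_add])
      have hFt : ∀ (r : S.O x) (m : M.M x) (b : S.O u.1), Ft (r • m) b = Ft m (r • b) := by
        intro r m b
        show b • M.res u.2 (r • m) = (r • b) • M.res u.2 m
        erw [M.res_smul, smul_smul]
        show (b * S.res u.2 r) • _ = (S.res u.2 r * b) • _
        rw [mul_comm]
      let ψt := TensorProduct.liftAddHom Ft hFt
      have hψt : Function.Bijective ψt := hQ u.2 ψt (fun m b => rfl)
      have hTex : Function.Exact (LinearMap.rTensor (S.O u.1) φx)
          (LinearMap.rTensor (S.O u.1) ψx) := rTensor_exact (S.O u.1) hEx hSx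
      have hTsurj : Function.Surjective (LinearMap.rTensor (S.O u.1) ψx) :=
        LinearMap.rTensor_surjective (S.O u.1) hSx
      have hcomm1 : ∀ f : Ix →₀ R, φm.map u (mapR (S.res u.2) f) = mapR (S.res u.2) (φx f) := by
        intro f
        rw [lc_comm (S.res u.2) (mapR (S.res u.2)) (mapR_smul (S.res u.2)) Subtype.val f]
        exact rfl
      have hcomm2 : ∀ f : (M.M x) →₀ R, ψm.map u (mapR (S.res u.2) f) = M.res u.2 (ψx f) := by
        intro f
        rw [lc_comm (S.res u.2) (M.res u.2) (M.res_smul u.2) id f]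
        exact rfl
      have sq1 : ∀ t, eJ (LinearMap.rTensor (S.O u.1) φx t) = φm.map u (eI t) := by
        intro t
        induction t with
        | zero =>
          erw [(LinearMap.rTensor (S.O u.1) φx).map_zero, eJ.map_zero, eI.map_zero,
            (φm.map u).map_zero]
          rfl
        | tmul f b =>
          erw [LinearMap.rTensor_tmul, heJ, heI, (φm.map u).map_smul, hcomm1]
          rfl
        | add s t ihs iht =>
          erw [(LinearMap.rTensor (S.O u.1) φx).map_add, eJ.map_add, eI.map_add,
            (φm.map u).map_add, ihs, iht]
          rfl
      have sq2 : ∀ t, ψt (LinearMap.rTensor (S.O u.1) ψx t) = ψm.map u (eJ t) := by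
        intro t
        induction t with
        | zero =>
          erw [(LinearMap.rTensor (S.O u.1) ψx).map_zero, ψt.map_zero, eJ.map_zero,
            (ψm.map u).map_zero]
          rfl
        | tmul f b =>
          erw [LinearMap.rTensor_tmul, heJ, (ψm.map u).map_smul, hcomm2]
          rfl
        | add s t ihs iht =>
          erw [(LinearMap.rTensor (S.O u.1) ψx).map_add, ψt.map_add, eJ.map_add,
            (ψm.map u).map_add, ihs, iht]
          rfl
      exact diagB (LinearMap.rTensor (S.O u.1) φx) (LinearMap.rTensor (S.O u.1) ψx)
        (φm.map u) (ψm.map u) eI eJ ψt sq1 sq2 heIbij.2 heJbij hψt hTsurj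
        hTex.apply_apply_eq_zero (fun b hb => (hTex b).mp hb)
    refine ⟨U, isUpperSet_Ici x, Set.self_mem_Ici, Ix, M.M x, φm, ψm,
      fun u => (key u).1, fun u => ?_⟩
    ext b
    simp only [LinearMap.mem_range, LinearMap.mem_ker]
    constructor
    · rintro ⟨a, rfl⟩
      exact (key u).2.1 a
    · exact (key u).2.2 b
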